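/- Let S and A be nonempty finite sets, R : S × A → ℝ, and p : S × A × S → ℝ with p(s' | s, a) ≥ 0 and Σ_{s'∈S} p(s' | s, a) = 1 for all (s, a). Let 0 ≤ γ < 1 and ω > 0, and define the MellowMax Bellman operator T_mm on functions Q : S × A → ℝ by (T_mm Q)(s, a) = R(s, a) + γ·Σ_{s'∈S} p(s' | s, a)·mm_ω(Q(s', ·)), where mm_ω acts on the vector (Q(s', a'))_{a'∈A}. Then for all Q, Q' : S × A → ℝ, max_{(s,a)} |(T_mm Q)(s, a) − (T_mm Q')(s, a)| ≤ γ·max_{(s,a)} |Q(s, a) − Q'(s, a)|, i.e., T_mm is a γ-contraction in the sup norm. -/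
import Mathlib


/-- The MellowMax operator over a finite index type `ι`:
`mm_ω(f) = (1/ω) log((1/|ι|) ∑ᵢ exp(ω f i))`. -/
noncomputable def mellowMax {ι : Type*} [Fintype ι] (ω : ℝ) (f : ι → ℝ) : ℝ :=
  (1 / ω) * Real.log ((1 / (Fintype.card ι : ℝ)) * ∑ i, Real.exp (ω * f i))

/-- The MellowMax Bellman operator
`(T_mm Q)(s,a) = R(s,a) + γ ∑_{s'} p(s'|s,a) mm_ω(Q(s',·))`. -/
noncomputable def mmBellman {S A : Type*} [Fintype S] [Fintype A]
    (R : S × A → ℝ) (p : S × A → S → ℝ) (γ ω : ℝ)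
    (Q : S × A → ℝ) : S × A → ℝ :=
  fun sa => R sa + γ * ∑ s' : S, p sa s' * mellowMax ω (fun a' => Q (s', a'))

lemma mellowMax_le {ι : Type*} [Fintype ι] [Nonempty ι] {ω : ℝ} (hω : 0 < ω)
    (f g : ι → ℝ) (c : ℝ) (h : ∀ i, f i ≤ g i + c) :
    mellowMax ω f ≤ mellowMax ω g + c := by
  have hn : (0 : ℝ) < (Fintype.card ι : ℝ) := by
    exact_mod_cast Fintype.card_pos
  have hpos : (0 : ℝ) < (1 / (Fintype.card ι : ℝ)) * ∑ i, Real.exp (ω * f i) := by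
    positivity
  have hpos' : (0 : ℝ) < (1 / (Fintype.card ι : ℝ)) * ∑ i, Real.exp (ω * g i) := by
    positivity
  have hle : (1 / (Fintype.card ι : ℝ)) * ∑ i, Real.exp (ω * f i)
      ≤ Real.exp (ω * c) * ((1 / (Fintype.card ι : ℝ)) * ∑ i, Real.exp (ω * g i)) := by
    have : ∑ i, Real.exp (ω * f i) ≤ ∑ i, Real.exp (ω * c) * Real.exp (ω * g i) := by
      apply Finset.sum_le_sum
      intro i _
      rw [← Real.exp_add]
      apply Real.exp_le_exp.2
      have := h i
      nlinarith [h i]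
    rw [← Finset.mul_sum] at this
    have h1 : (0:ℝ) ≤ 1 / (Fintype.card ι : ℝ) := by positivity
    calc (1 / (Fintype.card ι : ℝ)) * ∑ i, Real.exp (ω * f i)
        ≤ (1 / (Fintype.card ι : ℝ)) * (Real.exp (ω * c) * ∑ i, Real.exp (ω * g i)) :=
          mul_le_mul_of_nonneg_left this h1
      _ = Real.exp (ω * c) * ((1 / (Fintype.card ι : ℝ)) * ∑ i, Real.exp (ω * g i)) := by ring
  have hlog := Real.log_le_log hpos hle
  rw [Real.log_mul (Real.exp_ne_zero _) (ne_of_gt hpos'), Real.log_exp] at hlog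
  unfold mellowMax
  have h1ω : (0:ℝ) < 1 / ω := by positivity
  calc (1 / ω) * Real.log ((1 / (Fintype.card ι : ℝ)) * ∑ i, Real.exp (ω * f i))
      ≤ (1 / ω) * (ω * c + Real.log ((1 / (Fintype.card ι : ℝ)) * ∑ i, Real.exp (ω * g i))) :=
        mul_le_mul_of_nonneg_left hlog (le_of_lt h1ω)
    _ = (1 / ω) * Real.log ((1 / (Fintype.card ι : ℝ)) * ∑ i, Real.exp (ω * g i)) + c := by
        field_simp; ring
  
lemma abs_mellowMax_sub_le {ι : Type*} [Fintype ι] [Nonempty ι] {ω : ℝ} (hω : 0 < ω)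
    (f g : ι → ℝ) (c : ℝ) (h : ∀ i, |f i - g i| ≤ c) :
    |mellowMax ω f - mellowMax ω g| ≤ c := by
  rw [abs_sub_le_iff]
  constructor
  · have := mellowMax_le hω f g c (fun i => by have := abs_le.1 (h i); linarith [this.2])
    linarith
  · have := mellowMax_le hω g f c (fun i => by have := abs_le.1 (h i); linarith [this.1])
    linarith

/-- **T_mm is a γ-contraction in the sup norm**: for a finite MDP with
transition probabilities `p` and discount `0 ≤ γ < 1`,
`max_{(s,a)} |(T_mm Q)(s,a) - (T_mm Q')(s,a)| ≤ γ max_{(s,a)} |Q(s,a) - Q'(s,a)|`. -/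
theorem stmt_8 {S A : Type*} [Fintype S] [Fintype A] [Nonempty S] [Nonempty A]
    (R : S × A → ℝ) (p : S × A → S → ℝ)
    (hp0 : ∀ (sa : S × A) (s' : S), 0 ≤ p sa s')
    (hp1 : ∀ sa : S × A, ∑ s' : S, p sa s' = 1)
    (γ : ℝ) (hγ0 : 0 ≤ γ) (hγ1 : γ < 1) (ω : ℝ) (hω : 0 < ω)
    (Q Q' : S × A → ℝ) :
    (Finset.univ.sup' Finset.univ_nonempty
        fun sa : S × A => |mmBellman R p γ ω Q sa - mmBellman R p γ ω Q' sa|) ≤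
      γ * Finset.univ.sup' Finset.univ_nonempty
        fun sa : S × A => |Q sa - Q' sa| := by
  set M := Finset.univ.sup' Finset.univ_nonempty fun sa : S × A => |Q sa - Q' sa| with hM
  have hMmem : ∀ sa : S × A, |Q sa - Q' sa| ≤ M := fun sa =>
    Finset.le_sup' (fun sa : S × A => |Q sa - Q' sa|) (Finset.mem_univ sa)
  have hmm : ∀ s' : S,
      |mellowMax ω (fun a' => Q (s', a')) - mellowMax ω (fun a' => Q' (s', a'))| ≤ M := by
    intro s'
    exact abs_mellowMax_sub_le hω _ _ M (fun a' => hMmem (s', a'))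
  apply Finset.sup'_le
  intro sa _
  have hdiff : mmBellman R p γ ω Q sa - mmBellman R p γ ω Q' sa
      = γ * ∑ s' : S, p sa s' *
        (mellowMax ω (fun a' => Q (s', a')) - mellowMax ω (fun a' => Q' (s', a'))) := by
    unfold mmBellman
    rw [Finset.mul_sum, Finset.mul_sum, Finset.mul_sum]
    rw [show (∑ s' : S, γ * (p sa s' *
          ((mellowMax ω fun a' => Q (s', a')) - mellowMax ω fun a' => Q' (s', a'))))
        = ∑ s' : S, (γ * (p sa s' * mellowMax ω fun a' => Q (s', a'))
            - γ * (p sa s' * mellowMax ω fun a' => Q' (s', a'))) from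
      Finset.sum_congr rfl (fun _ _ => by ring), Finset.sum_sub_distrib]
    ring
  rw [hdiff, abs_mul, abs_of_nonneg hγ0]
  apply mul_le_mul_of_nonneg_left _ hγ0
  calc |∑ s' : S, p sa s' *
        (mellowMax ω (fun a' => Q (s', a')) - mellowMax ω (fun a' => Q' (s', a')))|
      ≤ ∑ s' : S, |p sa s' *
        (mellowMax ω (fun a' => Q (s', a')) - mellowMax ω (fun a' => Q' (s', a')))| :=
        Finset.abs_sum_le_sum_abs _ _
    _ ≤ ∑ s' : S, p sa s' * M := by
        apply Finset.sum_le_sum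
        intro s' _
        rw [abs_mul, abs_of_nonneg (hp0 sa s')]
        exact mul_le_mul_of_nonneg_left (hmm s') (hp0 sa s')
    _ = M := by rw [← Finset.sum_mul, hp1 sa, one_mul]
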